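/- Let m ≥ 1, let f_0, ..., f_m: F_p → ℂ be 1-bounded functions, and let a_1, ..., a_m ∈ F_p with a_m ≠ 0 and a_m distinct from a_1, ..., a_{m−1}. Then |E_{x,y ∈ F_p} f_0(x) f_1(x + a_1 y) ⋯ f_m(x + a_m y)| ≤ ‖f_m‖_{U^m}, where ‖·‖_{U^m} is the Gowers norm of order m on F_p. -/

import Mathlib

open Finset Complex

noncomputable def avg {α : Type*} [Fintype α] (f : α → ℂ) : ℂ :=
  (∑ x, f x) / (Fintype.card α : ℂ)

noncomputable def avgR {α : Type*} [Fintype α] (f : α → ℝ) : ℝ :=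
  (∑ x, f x) / (Fintype.card α : ℝ)

noncomputable def ep (p : ℕ) [NeZero p] (x : ZMod p) : ℂ :=
  Complex.exp (2 * Real.pi * Complex.I * (x.val : ℂ) / (p : ℂ))

noncomputable def conjIt (n : ℕ) (z : ℂ) : ℂ :=
  (fun w : ℂ => (starRingEnd ℂ) w)^[n] z

/-- `2^s`-th power of the Gowers norm of degree `s` along the vector `v`. -/
noncomputable def gowersPow {p D : ℕ} [NeZero p] (s : ℕ) (v : Fin D → ZMod p)
    (f : (Fin D → ZMod p) → ℂ) : ℂ :=
  avg fun xh : (Fin D → ZMod p) × (Fin s → ZMod p) =>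
    ∏ w : Fin s → Bool,
      conjIt (Finset.univ.filter (fun i => w i = true)).card
        (f (xh.1 + (∑ i, if w i then xh.2 i else 0) • v))

/-- `2^s`-th power of the one-dimensional Gowers norm of degree `s` on `F_p`. -/
noncomputable def gowersPow1 {p : ℕ} [NeZero p] (s : ℕ) (g : ZMod p → ℂ) : ℂ :=
  avg fun xh : ZMod p × (Fin s → ZMod p) =>
    ∏ w : Fin s → Bool,
      conjIt (Finset.univ.filter (fun i => w i = true)).card
        (g (xh.1 + ∑ i, if w i then xh.2 i else 0))

/-- Fourier transform of `f` along `v`. -/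
noncomputable def ft {p D : ℕ} [NeZero p] (f : (Fin D → ZMod p) → ℂ)
    (v : Fin D → ZMod p) (x : Fin D → ZMod p) (k : ZMod p) : ℂ :=
  avg fun m : ZMod p => f (x + m • v) * ep p (-(k * m))

section lemmas
variable {α β : Type*} [Fintype α] [Fintype β]

lemma div_card_mono {a b : ℝ} (n : ℕ) (h : a ≤ b) : a / (n:ℝ) ≤ b / (n:ℝ) := by
  rw [div_eq_mul_inv, div_eq_mul_inv]
  exact mul_le_mul_of_nonneg_right h (by positivity)

lemma abs_avg_le (f : α → ℂ) : ‖avg f‖ ≤ avgR fun x => ‖f x‖ := by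
  unfold avg avgR
  rw [norm_div, Complex.norm_natCast]
  exact div_card_mono _ (norm_sum_le _ _)

lemma avgR_mono {f g : α → ℝ} (h : ∀ x, f x ≤ g x) : avgR f ≤ avgR g :=
  div_card_mono _ (Finset.sum_le_sum fun i _ => h i)

lemma avgR_nonneg {f : α → ℝ} (h : ∀ x, 0 ≤ f x) : 0 ≤ avgR f := by
  unfold avgR
  apply div_nonneg (Finset.sum_nonneg fun i _ => h i) (by positivity)

lemma avgR_le_one {f : α → ℝ} (h : ∀ x, f x ≤ 1) : avgR f ≤ 1 := by
  unfold avgR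
  calc (∑ x, f x) / (Fintype.card α : ℝ) ≤ (∑ _x : α, (1:ℝ)) / (Fintype.card α : ℝ) :=
        div_card_mono _ (Finset.sum_le_sum fun i _ => h i)
    _ ≤ 1 := by simp [div_self_le_one]

lemma avg_equiv (e : α ≃ β) (f : β → ℂ) : avg (fun a => f (e a)) = avg f := by
  unfold avg
  rw [Fintype.sum_equiv e _ f (fun x => rfl), Fintype.card_congr e]

lemma avg_re (f : α → ℂ) : (avg f).re = avgR fun x => (f x).re := by
  unfold avg avgR
  rw [show ((Fintype.card α : ℕ) : ℂ) = (((Fintype.card α : ℕ) : ℝ) : ℂ) by push_cast; ring,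
    Complex.div_ofReal_re, Complex.re_sum]

lemma avg_prod (f : α × β → ℂ) : avg f = avg fun a => avg fun b => f (a, b) := by
  unfold avg
  rw [Fintype.sum_prod_type, Fintype.card_prod]
  push_cast
  rw [Finset.sum_div, Finset.sum_div]
  apply Finset.sum_congr rfl
  intro a _
  rw [div_div]
  ring_nf

lemma avgR_pow_le {f : α → ℝ} (h : ∀ x, 0 ≤ f x) (n : ℕ) :
    (avgR f) ^ (n + 1) ≤ avgR fun x => f x ^ (n + 1) := by
  unfold avgR
  rw [div_pow]
  calc (∑ x, f x) ^ (n+1) / (Fintype.card α : ℝ) ^ (n+1)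
      = ((∑ x, f x) ^ (n+1) / (Fintype.card α : ℝ) ^ n) / (Fintype.card α : ℝ) := by
        rw [div_div, ← pow_succ]
    _ ≤ (∑ x, f x ^ (n+1)) / (Fintype.card α : ℝ) := by
        apply div_card_mono
        simpa using pow_sum_div_card_le_sum_pow (f := f) (s := Finset.univ)
          (fun i _ => h i) n

lemma conjIt_mul (n : ℕ) (z w : ℂ) : conjIt n (z * w) = conjIt n z * conjIt n w := by
  induction n with
  | zero => rfl
  | succ k ih =>
      simp only [conjIt, Function.iterate_succ_apply'] at *
      rw [ih]; simp

lemma conjIt_succ (n : ℕ) (z : ℂ) : conjIt (n + 1) z = conjIt n ((starRingEnd ℂ) z) := by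
  simp [conjIt, Function.iterate_succ_apply]

lemma abs_conjIt (n : ℕ) (z : ℂ) : ‖conjIt n z‖ = ‖z‖ := by
  induction n with
  | zero => rfl
  | succ k ih =>
      rw [conjIt_succ, ← conjIt_succ]
      have : conjIt (k+1) z = (starRingEnd ℂ) (conjIt k z) := by
        simp [conjIt, Function.iterate_succ_apply']
      rw [this, Complex.norm_conj, ih]

end lemmas


noncomputable def mdiff {p : ℕ} (t : ZMod p) (g : ZMod p → ℂ) : ZMod p → ℂ :=
  fun x => g x * (starRingEnd ℂ) (g (x + t))

section gowers
variable {p : ℕ} [NeZero p]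

def consPairEquiv (p s : ℕ) :
    (ZMod p × (ZMod p × (Fin s → ZMod p))) ≃ (ZMod p × (Fin (s+1) → ZMod p)) where
  toFun q := (q.2.1, Fin.cons q.1 q.2.2)
  invFun q := (q.2 0, (q.1, fun i => q.2 i.succ))
  left_inv q := by simp
  right_inv q := by
    refine Prod.ext rfl ?_
    funext i
    refine Fin.cases ?_ ?_ i
    · simp
    · intro j; simp

lemma key_prod (s : ℕ) (g : ZMod p → ℂ) (x t : ZMod p) (h' : Fin s → ZMod p) :
    (∏ w : Fin (s+1) → Bool,
      conjIt (Finset.univ.filter (fun i => w i = true)).card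
        (g (x + ∑ i, if w i then (Fin.cons t h' : Fin (s+1) → ZMod p) i else 0)))
    = ∏ w' : Fin s → Bool,
      conjIt (Finset.univ.filter (fun i => w' i = true)).card
        ((mdiff t g) (x + ∑ i, if w' i then h' i else 0)) := by
  rw [← Equiv.prod_comp (Fin.consEquiv (fun _ => Bool))]
  rw [Fintype.prod_prod_type]
  rw [Fintype.prod_bool]
  rw [← Finset.prod_mul_distrib]
  apply Finset.prod_congr rfl
  intro w' _
  have hcons : ∀ (b : Bool), (Fin.consEquiv (fun _ => Bool)) (b, w') = Fin.cons b w' := fun b => rfl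
  rw [hcons, hcons]
  have hcard : ∀ b : Bool, (Finset.univ.filter (fun i => (Fin.cons b w' : Fin (s+1) → Bool) i = true)).card
      = (if b then 1 else 0) + (Finset.univ.filter (fun i => w' i = true)).card := by
    intro b
    rw [Finset.card_filter, Finset.card_filter, Fin.sum_univ_succ]
    simp [Fin.cons_zero, Fin.cons_succ]
  have hsum : ∀ b : Bool, (∑ i, if (Fin.cons b w' : Fin (s+1) → Bool) i then (Fin.cons t h' : Fin (s+1) → ZMod p) i else 0)
      = (if b then t else 0) + ∑ i, if w' i then h' i else 0 := by
    intro b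
    rw [Fin.sum_univ_succ]
    simp [Fin.cons_zero, Fin.cons_succ]
  rw [hcard true, hcard false, hsum true, hsum false]
  set k := (Finset.univ.filter (fun i => w' i = true)).card
  set S := ∑ i, if w' i then h' i else 0
  norm_num
  rw [show 1 + k = k + 1 from by omega, conjIt_succ, ← conjIt_mul]
  congr 1
  unfold mdiff
  rw [show x + (t + S) = x + S + t from by ring, mul_comm]

lemma gowersPow1_succ (s : ℕ) (g : ZMod p → ℂ) :
    gowersPow1 (s+1) g = avg fun t => gowersPow1 s (mdiff t g) := by
  unfold gowersPow1
  rw [← avg_equiv (consPairEquiv p s), avg_prod]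
  apply congrArg
  funext t
  apply congrArg
  funext xh
  exact key_prod s g xh.1 t xh.2

lemma avg_const {α : Type*} [Fintype α] [Nonempty α] (c : ℂ) : avg (fun _ : α => c) = c := by
  unfold avg
  rw [Finset.sum_const, Finset.card_univ, nsmul_eq_mul, mul_div_cancel_left₀]
  exact_mod_cast Fintype.card_ne_zero

lemma avg_mul_const {α : Type*} [Fintype α] (f : α → ℂ) (c : ℂ) :
    avg (fun x => f x * c) = avg f * c := by
  unfold avg
  rw [← Finset.sum_mul, div_mul_eq_mul_div]

lemma avg_const_mul {α : Type*} [Fintype α] (f : α → ℂ) (c : ℂ) :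
    avg (fun x => c * f x) = c * avg f := by
  unfold avg
  rw [← Finset.mul_sum, mul_div_assoc]

lemma conj_avg {α : Type*} [Fintype α] (f : α → ℂ) :
    (starRingEnd ℂ) (avg f) = avg fun x => (starRingEnd ℂ) (f x) := by
  unfold avg
  rw [map_div₀, map_sum, map_natCast]

lemma conjIt_zero (z : ℂ) : conjIt 0 z = z := rfl

lemma gowersPow1_zero (g : ZMod p → ℂ) : gowersPow1 0 g = avg g := by
  unfold gowersPow1
  have : ∀ xh : ZMod p × (Fin 0 → ZMod p),
      (∏ w : Fin 0 → Bool, conjIt (Finset.univ.filter (fun i => w i = true)).card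
        (g (xh.1 + ∑ i, if w i then xh.2 i else 0))) = g xh.1 := by
    intro xh
    rw [Fintype.prod_unique]
    simp [conjIt_zero]
  rw [show (fun xh : ZMod p × (Fin 0 → ZMod p) =>
      (∏ w : Fin 0 → Bool, conjIt (Finset.univ.filter (fun i => w i = true)).card
        (g (xh.1 + ∑ i, if w i then xh.2 i else 0)))) = fun xh => g xh.1 from funext this]
  rw [avg_prod]
  apply congrArg
  funext x
  exact avg_const (g x)

lemma avg_shift (g : ZMod p → ℂ) (x : ZMod p) : avg (fun t => g (x + t)) = avg g := by
  have := avg_equiv (Equiv.addLeft x) g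
  simpa using this

lemma gowersPow1_one (g : ZMod p → ℂ) :
    gowersPow1 1 g = ((‖avg g‖ ^ 2 : ℝ) : ℂ) := by
  set F : ZMod p × ZMod p → ℂ := fun q => g q.2 * (starRingEnd ℂ) (g (q.2 + q.1)) with hF
  set G : ZMod p × ZMod p → ℂ := fun q => g q.1 * (starRingEnd ℂ) (g (q.1 + q.2)) with hG
  have h1 : gowersPow1 1 g = avg (fun t => avg fun x => F (t, x)) := by
    rw [show (1 : ℕ) = 0 + 1 from rfl, gowersPow1_succ]
    apply congrArg
    funext t
    rw [gowersPow1_zero]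
    rfl
  have h3 : avg F = avg G := by
    have := avg_equiv (Equiv.prodComm (ZMod p) (ZMod p)) G
    simpa [hF, hG] using this
  have inner : ∀ x : ZMod p, (avg fun t => G (x, t)) = g x * (starRingEnd ℂ) (avg g) := by
    intro x
    show (avg fun t => g x * (starRingEnd ℂ) (g (x + t))) = _
    rw [avg_const_mul]
    congr 1
    rw [conj_avg, avg_shift (fun y => (starRingEnd ℂ) (g y)) x]
  calc gowersPow1 1 g = avg (fun t => avg fun x => F (t, x)) := h1
    _ = avg F := (avg_prod F).symm
    _ = avg G := h3
    _ = avg fun x => avg fun t => G (x, t) := avg_prod G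
    _ = avg fun x => g x * (starRingEnd ℂ) (avg g) := by
        apply congrArg; funext x; exact inner x
    _ = avg g * (starRingEnd ℂ) (avg g) := avg_mul_const g _
    _ = ((‖avg g‖ ^ 2 : ℝ) : ℂ) := by rw [Complex.mul_conj, Complex.sq_norm]

lemma gowersPow1_re_nonneg (s : ℕ) (hs : 1 ≤ s) (g : ZMod p → ℂ) :
    0 ≤ (gowersPow1 s g).re := by
  induction s, hs using Nat.le_induction generalizing g with
  | base => rw [gowersPow1_one, Complex.ofReal_re]; positivity
  | succ n hn ih =>
      rw [gowersPow1_succ, avg_re]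
      exact avgR_nonneg fun t => ih (mdiff t g)

lemma gowersPow1_succ_re (s : ℕ) (g : ZMod p → ℂ) :
    (gowersPow1 (s+1) g).re = avgR fun t => (gowersPow1 s (mdiff t g)).re := by
  rw [gowersPow1_succ, avg_re]

end gowers

section mainlemmas
variable {α β : Type*} [Fintype α] [Fintype β]

lemma avgR_equiv (e : α ≃ β) (f : β → ℝ) : avgR (fun a => f (e a)) = avgR f := by
  unfold avgR
  rw [Fintype.sum_equiv e _ f (fun x => rfl), Fintype.card_congr e]

lemma avgR_equiv' (e : α ≃ β) (F : β → ℝ) (G : α → ℝ) (h : ∀ x, G x = F (e x)) :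
    avgR G = avgR F := by
  rw [show G = fun x => F (e x) from funext h]
  exact avgR_equiv e F

lemma avg_swap (f : α → β → ℂ) :
    (avg fun a => avg fun b => f a b) = avg fun b => avg fun a => f a b := by
  have h1 : avg (fun q : α × β => f q.1 q.2) = avg fun a => avg fun b => f a b :=
    avg_prod (fun q : α × β => f q.1 q.2)
  have h2 : avg (fun q : β × α => f q.2 q.1) = avg (fun q : α × β => f q.1 q.2) := by
    have := avg_equiv (Equiv.prodComm β α) (fun q : α × β => f q.1 q.2)
    simpa using this
  have h3 : avg (fun q : β × α => f q.2 q.1) = avg fun b => avg fun a => f a b :=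
    avg_prod (fun q : β × α => f q.2 q.1)
  rw [← h1, ← h2, h3]

lemma re_le_abs' (z : ℂ) : z.re ≤ ‖z‖ := Complex.re_le_norm z

lemma mdiff_abs_le {p : ℕ} {f : ZMod p → ℂ} (hf : ∀ x, ‖f x‖ ≤ 1) (u : ZMod p)
    (x : ZMod p) : ‖mdiff u f x‖ ≤ 1 := by
  unfold mdiff
  rw [norm_mul, Complex.norm_conj]
  exact mul_le_one₀ (hf x) (norm_nonneg _) (hf _)

def mulEquiv0 {p : ℕ} [Fact p.Prime] (c : ZMod p) (hc : c ≠ 0) : ZMod p ≃ ZMod p where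
  toFun t := c * t
  invFun t := c⁻¹ * t
  left_inv t := by field_simp
  right_inv t := by field_simp

def shearEquiv (p : ℕ) : ZMod p × ZMod p ≃ ZMod p × ZMod p where
  toFun q := (q.1, q.1 + q.2)
  invFun q := (q.1, q.2 - q.1)
  left_inv q := by simp
  right_inv q := by simp

def subEquiv {p : ℕ} (c : ZMod p) : ZMod p × ZMod p ≃ ZMod p × ZMod p where
  toFun q := (q.1 - c * q.2, q.2)
  invFun q := (q.1 + c * q.2, q.2)
  left_inv q := by simp
  right_inv q := by simp

end mainlemmas

section csstep
variable {p : ℕ} [NeZero p]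

set_option maxHeartbeats 1000000 in
lemma cs_identity (Φ : ZMod p → ZMod p → ℂ) :
    avgR (fun x => ‖avg fun y => Φ x y‖ ^ 2)
      = avgR (fun t => (avg fun xy : ZMod p × ZMod p =>
          Φ xy.1 xy.2 * (starRingEnd ℂ) (Φ xy.1 (xy.2 + t))).re) := by
  have hx : ∀ x : ZMod p, ((‖avg fun y => Φ x y‖) ^ 2 : ℝ)
      = (avg fun t => avg fun y => Φ x y * (starRingEnd ℂ) (Φ x (y + t))).re := by
    intro x
    have h0 : ((‖avg fun y => Φ x y‖) ^ 2 : ℝ)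
        = ((avg fun y => Φ x y) * (starRingEnd ℂ) (avg fun y => Φ x y)).re := by
      rw [Complex.mul_conj, Complex.sq_norm]
      simp
    rw [h0]
    congr 1
    calc (avg fun y => Φ x y) * (starRingEnd ℂ) (avg fun y => Φ x y)
        = avg fun y => Φ x y * (starRingEnd ℂ) (avg fun y' => Φ x y') :=
          (avg_mul_const (fun y => Φ x y) ((starRingEnd ℂ) (avg fun y' => Φ x y'))).symm
      _ = avg fun y => avg fun y' => Φ x y * (starRingEnd ℂ) (Φ x y') := by
          apply congrArg; funext y
          rw [conj_avg, avg_const_mul]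
      _ = avg (fun q : ZMod p × ZMod p => Φ x q.1 * (starRingEnd ℂ) (Φ x q.2)) :=
          (avg_prod (fun q : ZMod p × ZMod p => Φ x q.1 * (starRingEnd ℂ) (Φ x q.2))).symm
      _ = avg (fun q : ZMod p × ZMod p => Φ x q.1 * (starRingEnd ℂ) (Φ x (q.1 + q.2))) :=
          (avg_equiv (shearEquiv p) (fun q : ZMod p × ZMod p =>
            Φ x q.1 * (starRingEnd ℂ) (Φ x q.2))).symm
      _ = avg fun y => avg fun t => Φ x y * (starRingEnd ℂ) (Φ x (y + t)) :=
          avg_prod (fun q : ZMod p × ZMod p => Φ x q.1 * (starRingEnd ℂ) (Φ x (q.1 + q.2)))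
      _ = avg fun t => avg fun y => Φ x y * (starRingEnd ℂ) (Φ x (y + t)) :=
          avg_swap (fun y t => Φ x y * (starRingEnd ℂ) (Φ x (y + t)))
  calc avgR (fun x => ‖avg fun y => Φ x y‖ ^ 2)
      = avgR (fun x => (avg fun t => avg fun y =>
          Φ x y * (starRingEnd ℂ) (Φ x (y + t))).re) := by
        apply congrArg; funext x; exact hx x
    _ = (avg fun x => avg fun t => avg fun y =>
          Φ x y * (starRingEnd ℂ) (Φ x (y + t))).re :=
        (avg_re (fun x => avg fun t => avg fun y =>
          Φ x y * (starRingEnd ℂ) (Φ x (y + t)))).symm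
    _ = (avg fun t => avg fun x => avg fun y =>
          Φ x y * (starRingEnd ℂ) (Φ x (y + t))).re := by
        rw [avg_swap (fun x t => avg fun y => Φ x y * (starRingEnd ℂ) (Φ x (y + t)))]
    _ = avgR (fun t => (avg fun x => avg fun y =>
          Φ x y * (starRingEnd ℂ) (Φ x (y + t))).re) :=
        avg_re (fun t => avg fun x => avg fun y =>
          Φ x y * (starRingEnd ℂ) (Φ x (y + t)))
    _ = avgR (fun t => (avg fun xy : ZMod p × ZMod p =>
          Φ xy.1 xy.2 * (starRingEnd ℂ) (Φ xy.1 (xy.2 + t))).re) := by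
        apply congrArg; funext t
        congr 1
        exact (avg_prod (fun xy : ZMod p × ZMod p =>
          Φ xy.1 xy.2 * (starRingEnd ℂ) (Φ xy.1 (xy.2 + t)))).symm

lemma subst_step [Fact p.Prime] (m : ℕ) (D : Fin (m+1) → ZMod p → ℂ)
    (a : Fin (m+1) → ZMod p) :
    (avg fun xy : ZMod p × ZMod p => ∏ i : Fin (m+1), D i (xy.1 + a i * xy.2))
      = avg fun xy : ZMod p × ZMod p =>
          D 0 xy.1 * ∏ j : Fin m, D j.succ (xy.1 + (a j.succ - a 0) * xy.2) := by
  calc (avg fun xy : ZMod p × ZMod p => ∏ i : Fin (m+1), D i (xy.1 + a i * xy.2))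
      = avg fun q : ZMod p × ZMod p =>
          ∏ i : Fin (m+1), D i (q.1 - a 0 * q.2 + a i * q.2) :=
        (avg_equiv (subEquiv (a 0)) (fun xy : ZMod p × ZMod p =>
          ∏ i : Fin (m+1), D i (xy.1 + a i * xy.2))).symm
    _ = avg fun xy : ZMod p × ZMod p =>
          D 0 xy.1 * ∏ j : Fin m, D j.succ (xy.1 + (a j.succ - a 0) * xy.2) := by
        apply congrArg; funext q
        rw [Fin.prod_univ_succ]
        congr 1
        · congr 1; ring
        · apply Finset.prod_congr rfl
          intro j _
          congr 1
          ring

end csstep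

set_option maxHeartbeats 2000000 in
lemma key_main {p : ℕ} [Fact p.Prime] [NeZero p] (m : ℕ) (hm : 1 ≤ m)
    (f0 : ZMod p → ℂ) (f : Fin m → ZMod p → ℂ)
    (hf0 : ∀ x, ‖f0 x‖ ≤ 1) (hf : ∀ i x, ‖f i x‖ ≤ 1)
    (a : Fin m → ZMod p)
    (ham : a ⟨m - 1, Nat.sub_lt hm Nat.one_pos⟩ ≠ 0)
    (hdist : ∀ i : Fin m, (i : ℕ) < m - 1 → a ⟨m - 1, Nat.sub_lt hm Nat.one_pos⟩ ≠ a i) :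
    ‖avg fun xy : ZMod p × ZMod p =>
        f0 xy.1 * ∏ i : Fin m, f i (xy.1 + a i * xy.2)‖ ^ (2 ^ m)
      ≤ (gowersPow1 m (f ⟨m - 1, Nat.sub_lt hm Nat.one_pos⟩)).re := by
  induction m, hm using Nat.le_induction generalizing f0 with
  | base =>
    simp only [Fin.fin_one_eq_zero] at ham hdist ⊢
    have hA : (avg fun xy : ZMod p × ZMod p =>
          f0 xy.1 * ∏ i : Fin 1, f 0 (xy.1 + a 0 * xy.2))
        = avg f0 * avg (f 0) := by
      calc (avg fun xy : ZMod p × ZMod p => f0 xy.1 * ∏ i : Fin 1, f 0 (xy.1 + a 0 * xy.2))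
          = avg fun xy : ZMod p × ZMod p => f0 xy.1 * f 0 (xy.1 + a 0 * xy.2) := by
            apply congrArg; funext xy
            rw [Fin.prod_univ_one (fun _ : Fin 1 => f 0 (xy.1 + a 0 * xy.2))]
        _ = avg fun x => avg fun y => f0 x * f 0 (x + a 0 * y) :=
            avg_prod (fun xy : ZMod p × ZMod p => f0 xy.1 * f 0 (xy.1 + a 0 * xy.2))
        _ = avg fun x => f0 x * avg (fun y => f 0 (x + a 0 * y)) := by
            apply congrArg; funext x
            exact avg_const_mul (fun y => f 0 (x + a 0 * y)) (f0 x)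
        _ = avg fun x => f0 x * avg (f 0) := by
            apply congrArg; funext x
            congr 1
            have := avg_equiv ((Equiv.mulLeft₀ (a 0) ham).trans (Equiv.addLeft x)) (f 0)
            simpa using this
        _ = avg f0 * avg (f 0) := avg_mul_const f0 (avg (f 0))
    rw [hA, gowersPow1_one, Complex.ofReal_re, norm_mul, pow_one, mul_pow]
    have hb : ‖avg f0‖ ≤ 1 := (abs_avg_le f0).trans (avgR_le_one hf0)
    have h1 : ‖avg f0‖ ^ 2 ≤ 1 :=
      pow_le_one₀ (norm_nonneg _) hb
    nlinarith [sq_nonneg (‖avg (f 0)‖), norm_nonneg (avg (f 0))]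
  | succ m hm ih =>
    have hLm : ((⟨m - 1, by omega⟩ : Fin m).succ : Fin (m + 1)) = ⟨m, by omega⟩ := by
      apply Fin.ext
      simp only [Fin.val_succ]
      omega
    have hd0 : a ⟨m, by omega⟩ ≠ a 0 :=
      hdist 0 (by simp only [Fin.val_zero]; omega)
    -- Step 2 bound, for each t
    have hBt : ∀ t : ZMod p,
        ‖avg fun xy : ZMod p × ZMod p =>
            ∏ i : Fin (m+1), mdiff (a i * t) (f i) (xy.1 + a i * xy.2)‖ ^ (2 ^ m)
          ≤ (gowersPow1 m (mdiff (a ⟨m, by omega⟩ * t) (f ⟨m, by omega⟩))).re := by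
      intro t
      rw [subst_step m (fun i => mdiff (a i * t) (f i)) a]
      have hb : (fun j : Fin m => a j.succ - a 0) ⟨m - 1, by omega⟩ ≠ 0 := by
        show a (⟨m - 1, by omega⟩ : Fin m).succ - a 0 ≠ 0
        rw [hLm]
        exact sub_ne_zero_of_ne hd0
      have hbd : ∀ j : Fin m, (j : ℕ) < m - 1 →
          (fun j : Fin m => a j.succ - a 0) ⟨m - 1, by omega⟩ ≠ (fun j : Fin m => a j.succ - a 0) j := by
        intro j hj
        show a (⟨m - 1, by omega⟩ : Fin m).succ - a 0 ≠ a j.succ - a 0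
        rw [hLm]
        intro hEq
        exact hdist j.succ (by simp only [Fin.val_succ]; omega) (sub_left_inj.mp hEq)
      have h := ih (mdiff (a 0 * t) (f 0)) (fun j => mdiff (a j.succ * t) (f j.succ))
        (mdiff_abs_le (hf 0) _) (fun j x => mdiff_abs_le (hf j.succ) _ x)
        (fun j => a j.succ - a 0) hb hbd
      simp only [hLm] at h
      exact h
    -- Step 1: Cauchy-Schwarz
    have hA1 : (avg fun xy : ZMod p × ZMod p =>
          f0 xy.1 * ∏ i : Fin (m+1), f i (xy.1 + a i * xy.2))
        = avg fun x => f0 x * avg fun y => ∏ i : Fin (m+1), f i (x + a i * y) := by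
      calc (avg fun xy : ZMod p × ZMod p =>
            f0 xy.1 * ∏ i : Fin (m+1), f i (xy.1 + a i * xy.2))
          = avg fun x => avg fun y => f0 x * ∏ i : Fin (m+1), f i (x + a i * y) :=
            avg_prod (fun xy : ZMod p × ZMod p =>
              f0 xy.1 * ∏ i : Fin (m+1), f i (xy.1 + a i * xy.2))
        _ = avg fun x => f0 x * avg fun y => ∏ i : Fin (m+1), f i (x + a i * y) := by
            apply congrArg; funext x
            exact avg_const_mul (fun y => ∏ i : Fin (m+1), f i (x + a i * y)) (f0 x)
    have habsA : ‖avg fun xy : ZMod p × ZMod p =>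
          f0 xy.1 * ∏ i : Fin (m+1), f i (xy.1 + a i * xy.2)‖
        ≤ avgR fun x => ‖avg fun y => ∏ i : Fin (m+1), f i (x + a i * y)‖ := by
      rw [hA1]
      refine (abs_avg_le _).trans (avgR_mono fun x => ?_)
      rw [norm_mul]
      exact mul_le_of_le_one_left (norm_nonneg _) (hf0 x)
    -- pointwise rewrite of the CS integrand
    have hpt : ∀ (x y t : ZMod p),
        (∏ i : Fin (m+1), f i (x + a i * y)) *
            (starRingEnd ℂ) (∏ i : Fin (m+1), f i (x + a i * (y + t)))
          = ∏ i : Fin (m+1), mdiff (a i * t) (f i) (x + a i * y) := by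
      intro x y t
      rw [map_prod, ← Finset.prod_mul_distrib]
      apply Finset.prod_congr rfl
      intro i _
      show f i (x + a i * y) * (starRingEnd ℂ) (f i (x + a i * (y + t)))
          = f i (x + a i * y) * (starRingEnd ℂ) (f i (x + a i * y + a i * t))
      congr 2
      ring
    have hCS : avgR (fun x => ‖avg fun y =>
          ∏ i : Fin (m+1), f i (x + a i * y)‖ ^ 2)
        = avgR (fun t => (avg fun xy : ZMod p × ZMod p =>
            ∏ i : Fin (m+1), mdiff (a i * t) (f i) (xy.1 + a i * xy.2)).re) := by
      rw [cs_identity (fun x y => ∏ i : Fin (m+1), f i (x + a i * y))]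
      apply congrArg; funext t
      congr 1
      apply congrArg; funext xy
      exact hpt xy.1 xy.2 t
    -- assemble
    have hstep2 : ‖avg fun xy : ZMod p × ZMod p =>
          f0 xy.1 * ∏ i : Fin (m+1), f i (xy.1 + a i * xy.2)‖ ^ 2
        ≤ avgR fun t => ‖avg fun xy : ZMod p × ZMod p =>
            ∏ i : Fin (m+1), mdiff (a i * t) (f i) (xy.1 + a i * xy.2)‖ := by
      calc ‖avg fun xy : ZMod p × ZMod p =>
            f0 xy.1 * ∏ i : Fin (m+1), f i (xy.1 + a i * xy.2)‖ ^ 2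
          ≤ (avgR fun x => ‖avg fun y =>
              ∏ i : Fin (m+1), f i (x + a i * y)‖) ^ 2 :=
            pow_le_pow_left₀ (norm_nonneg _) habsA 2
        _ ≤ avgR fun x => ‖avg fun y =>
              ∏ i : Fin (m+1), f i (x + a i * y)‖ ^ 2 := by
            have := avgR_pow_le (f := fun x => ‖avg fun y =>
              ∏ i : Fin (m+1), f i (x + a i * y)‖) (fun x => norm_nonneg _) 1
            simpa using this
        _ = avgR fun t => (avg fun xy : ZMod p × ZMod p =>
              ∏ i : Fin (m+1), mdiff (a i * t) (f i) (xy.1 + a i * xy.2)).re := hCS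
        _ ≤ avgR fun t => ‖avg fun xy : ZMod p × ZMod p =>
              ∏ i : Fin (m+1), mdiff (a i * t) (f i) (xy.1 + a i * xy.2)‖ :=
            avgR_mono fun t => Complex.re_le_norm _
    have h2m : 2 ^ m = (2 ^ m - 1) + 1 := by
      have := Nat.one_le_two_pow (n := m)
      omega
    calc ‖avg fun xy : ZMod p × ZMod p =>
          f0 xy.1 * ∏ i : Fin (m+1), f i (xy.1 + a i * xy.2)‖ ^ (2 ^ (m+1))
        = (‖avg fun xy : ZMod p × ZMod p =>
            f0 xy.1 * ∏ i : Fin (m+1), f i (xy.1 + a i * xy.2)‖ ^ 2) ^ (2 ^ m) := by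
          rw [← pow_mul, ← pow_succ']
      _ ≤ (avgR fun t => ‖avg fun xy : ZMod p × ZMod p =>
            ∏ i : Fin (m+1), mdiff (a i * t) (f i) (xy.1 + a i * xy.2)‖) ^ (2 ^ m) :=
          pow_le_pow_left₀ (sq_nonneg _) hstep2 _
      _ ≤ avgR fun t => ‖avg fun xy : ZMod p × ZMod p =>
            ∏ i : Fin (m+1), mdiff (a i * t) (f i) (xy.1 + a i * xy.2)‖ ^ (2 ^ m) := by
          rw [h2m]
          exact avgR_pow_le (fun t => norm_nonneg _) _
      _ ≤ avgR fun t => (gowersPow1 m (mdiff (a ⟨m, by omega⟩ * t) (f ⟨m, by omega⟩))).re :=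
          avgR_mono hBt
      _ = avgR fun u => (gowersPow1 m (mdiff u (f ⟨m, by omega⟩))).re := by
          refine avgR_equiv' (mulEquiv0 (a ⟨m, by omega⟩) ham)
            (fun u => (gowersPow1 m (mdiff u (f ⟨m, by omega⟩))).re) _ (fun t => ?_)
          simp only [mulEquiv0, Equiv.coe_fn_mk]
      _ = (gowersPow1 (m+1) (f ⟨m, by omega⟩)).re := (gowersPow1_succ_re m (f ⟨m, by omega⟩)).symm

theorem stmt11 {p : ℕ} [Fact p.Prime] [NeZero p] (m : ℕ) (hm : 1 ≤ m)
    (f0 : ZMod p → ℂ) (f : Fin m → ZMod p → ℂ)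
    (hf0 : ∀ x, ‖f0 x‖ ≤ 1) (hf : ∀ i x, ‖f i x‖ ≤ 1)
    (a : Fin m → ZMod p)
    (ham : a ⟨m - 1, by omega⟩ ≠ 0)
    (hdist : ∀ i : Fin m, (i : ℕ) < m - 1 → a ⟨m - 1, by omega⟩ ≠ a i) :
    ‖avg fun xy : ZMod p × ZMod p =>
        f0 xy.1 * ∏ i : Fin m, f i (xy.1 + a i * xy.2)‖
      ≤ (gowersPow1 m (f ⟨m - 1, by omega⟩)).re ^ (((2 : ℝ) ^ m)⁻¹) := by
  have hk := key_main m hm f0 f hf0 hf a ham hdist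
  have hG : 0 ≤ (gowersPow1 m (f ⟨m - 1, by omega⟩)).re :=
    gowersPow1_re_nonneg m hm _
  have habs : (0:ℝ) ≤ ‖avg fun xy : ZMod p × ZMod p =>
      f0 xy.1 * ∏ i : Fin m, f i (xy.1 + a i * xy.2)‖ := norm_nonneg _
  have h2 : ((2:ℝ) ^ m) = ((2 ^ m : ℕ) : ℝ) := by push_cast; ring
  have h1 : ‖avg fun xy : ZMod p × ZMod p =>
        f0 xy.1 * ∏ i : Fin m, f i (xy.1 + a i * xy.2)‖
      = ((‖avg fun xy : ZMod p × ZMod p =>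
          f0 xy.1 * ∏ i : Fin m, f i (xy.1 + a i * xy.2)‖ ^ (2 ^ m : ℕ) : ℝ))
        ^ (((2:ℝ) ^ m)⁻¹) := by
    rw [← Real.rpow_natCast (‖avg fun xy : ZMod p × ZMod p =>
          f0 xy.1 * ∏ i : Fin m, f i (xy.1 + a i * xy.2)‖) (2 ^ m),
      ← Real.rpow_mul habs, h2, mul_inv_cancel₀ (by positivity), Real.rpow_one]
  rw [h1]
  exact Real.rpow_le_rpow (by positivity) hk (by positivity)
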